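/- Let (d_n, k_n) be a sequence of admissible dimension pairs with d_n → ∞ as n → ∞. Then σ_{d_n,k_n} → 0 as n → ∞, where σ_{d,k}² = π^{(d−k)/2} · Γ((2k−d−1)/2) / Γ((k−1)/2). -/

import Mathlib

open Filter

/-- `σ_{d,k} > 0` defined by `σ_{d,k}² = π^{(d−k)/2} Γ((2k−d−1)/2)/Γ((k−1)/2)`. -/
noncomputable def sigmaHyp (d k : ℕ) : ℝ :=
  Real.sqrt (Real.pi ^ (((d : ℝ) - k) / 2) * Real.Gamma ((2 * (k : ℝ) - d - 1) / 2) /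
    Real.Gamma (((k : ℝ) - 1) / 2))

/-- Log-convexity of `Γ` gives `Γ(x) (x-1)^(y-x) ≤ Γ(y)` for `1 < x ≤ y`. -/
private lemma gammaA {x y : ℝ} (hx : 1 < x) (hxy : x ≤ y) :
    Real.Gamma x * (x - 1) ^ (y - x) ≤ Real.Gamma y := by
  rcases eq_or_lt_of_le hxy with rfl | hlt
  · simp
  · have hx1 : (0:ℝ) < x - 1 := by linarith
    have hx0 : (0:ℝ) < x := by linarith
    have hy0 : (0:ℝ) < y := by linarith
    have hGx1 := Real.Gamma_pos_of_pos hx1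
    have hGx := Real.Gamma_pos_of_pos hx0
    have hGy := Real.Gamma_pos_of_pos hy0
    have hslope := Real.convexOn_log_Gamma.slope_mono_adjacent
      (Set.mem_Ioi.mpr hx1) (Set.mem_Ioi.mpr hy0) (by linarith) hlt
    simp only [Function.comp_apply] at hslope
    have hrec : Real.Gamma x = (x - 1) * Real.Gamma (x - 1) := by
      have h := Real.Gamma_add_one (ne_of_gt hx1)
      rw [sub_add_cancel] at h
      exact h
    have hlog : Real.log (Real.Gamma x) - Real.log (Real.Gamma (x - 1)) = Real.log (x - 1) := by
      rw [hrec, Real.log_mul (ne_of_gt hx1) (ne_of_gt hGx1)]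
      ring
    have hden : x - (x - 1) = 1 := by ring
    rw [hden, div_one, hlog] at hslope
    have hyx : (0:ℝ) < y - x := by linarith
    have hkey : Real.log (x - 1) * (y - x) ≤
        Real.log (Real.Gamma y) - Real.log (Real.Gamma x) := by
      have h := (le_div_iff₀ hyx).mp hslope
      linarith
    calc Real.Gamma x * (x - 1) ^ (y - x)
        = Real.exp (Real.log (Real.Gamma x) + Real.log (x - 1) * (y - x)) := by
          rw [Real.exp_add, Real.exp_log hGx, Real.rpow_def_of_pos hx1]
      _ ≤ Real.exp (Real.log (Real.Gamma y)) := by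
          apply Real.exp_le_exp.mpr; linarith
      _ = Real.Gamma y := Real.exp_log hGy

/-- An explicit upper bound function tending to `0`. -/
noncomputable def Fbound (b : ℝ) : ℝ :=
  Real.sqrt (3 * Real.pi / b) + 4 * (2:ℝ) ^ (-(b / 100)) +
    (4 / 3 * Real.Gamma 9 * (29:ℝ) ^ (30:ℝ)) * (Real.pi / 29) ^ b

set_option maxHeartbeats 1000000 in
private lemma mainBound (a m : ℝ) (ha : 1/2 ≤ a) (hm : 1/2 ≤ m) (hb : 400 ≤ a + m) :
    Real.pi ^ m * Real.Gamma a / Real.Gamma (a + m) ≤ Fbound (a + m) := by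
  have hpi := Real.pi_gt_three
  have hpi' := Real.pi_lt_four
  have ha0 : 0 < a := by linarith
  have hm0 : 0 < m := by linarith
  have hb0 : (0:ℝ) < a + m := by linarith
  have hGa := Real.Gamma_pos_of_pos ha0
  have hGb := Real.Gamma_pos_of_pos hb0
  have hpim : (0:ℝ) < Real.pi ^ m := Real.rpow_pos_of_pos Real.pi_pos m
  have hG9 : (0:ℝ) < Real.Gamma 9 := Real.Gamma_pos_of_pos (by norm_num)
  have ht1 : 0 ≤ Real.sqrt (3 * Real.pi / (a + m)) := Real.sqrt_nonneg _
  have ht2 : 0 ≤ 4 * (2:ℝ) ^ (-((a + m) / 100)) := by positivity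
  have ht3 : 0 ≤ (4 / 3 * Real.Gamma 9 * (29:ℝ) ^ (30:ℝ)) * (Real.pi / 29) ^ (a + m) := by
    have h1 : (0:ℝ) < Real.pi / 29 := by positivity
    positivity
  rcases le_or_gt m ((a + m) / 100) with hcase | hcase
  · -- small `m`, large `a`
    have ha1 : (1:ℝ) < a := by linarith
    have ha1' : (0:ℝ) < a - 1 := by linarith
    have hA := gammaA ha1 (show a ≤ a + m by linarith)
    rw [show a + m - a = m by ring] at hA
    have hpow : (0:ℝ) < (a - 1) ^ m := Real.rpow_pos_of_pos ha1' m
    have hE1 : Real.pi ^ m * Real.Gamma a / Real.Gamma (a + m) ≤ Real.pi ^ m / (a - 1) ^ m := by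
      rw [div_le_div_iff₀ hGb hpow]
      calc Real.pi ^ m * Real.Gamma a * (a - 1) ^ m
          = Real.pi ^ m * (Real.Gamma a * (a - 1) ^ m) := by ring
        _ ≤ Real.pi ^ m * Real.Gamma (a + m) := by
            exact mul_le_mul_of_nonneg_left hA (le_of_lt hpim)
      -- goal closed
    have hq : Real.pi / (a - 1) ≤ 3 * Real.pi / (a + m) := by
      rw [div_le_div_iff₀ ha1' hb0]
      nlinarith [Real.pi_pos]
    have hq1 : 3 * Real.pi / (a + m) ≤ 1 := by
      rw [div_le_one hb0]; nlinarith
    have e1 : Real.pi ^ m / (a - 1) ^ m = (Real.pi / (a - 1)) ^ m :=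
      (Real.div_rpow (le_of_lt Real.pi_pos) (le_of_lt ha1') m).symm
    have hE2 : (Real.pi / (a - 1)) ^ m ≤ (3 * Real.pi / (a + m)) ^ m :=
      Real.rpow_le_rpow (by positivity) hq (le_of_lt hm0)
    have hE3 : (3 * Real.pi / (a + m)) ^ m ≤ (3 * Real.pi / (a + m)) ^ ((1:ℝ)/2) :=
      Real.rpow_le_rpow_of_exponent_ge (by positivity) hq1 hm
    have hE4 : (3 * Real.pi / (a + m)) ^ ((1:ℝ)/2) = Real.sqrt (3 * Real.pi / (a + m)) :=
      (Real.sqrt_eq_rpow _).symm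
    unfold Fbound
    rw [e1] at hE1
    linarith
  · -- large `m`
    have hm4 : 4 < m := by linarith
    have ha2 : (1:ℝ) < a + 2 := by linarith
    have ha10 : (0:ℝ) < a + 1 := by linarith
    have hA := gammaA ha2 (show a + 2 ≤ a + m by linarith)
    rw [show a + m - (a + 2) = m - 2 by ring, show a + 2 - 1 = a + 1 by ring] at hA
    have hrec2 : Real.Gamma (a + 2) = (a + 1) * (a * Real.Gamma a) := by
      have h1 := Real.Gamma_add_one (ne_of_gt ha0)
      have h2 := Real.Gamma_add_one (s := a + 1) (by positivity)
      rw [show a + 2 = a + 1 + 1 by ring, h2, h1]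
    have hP : a * Real.Gamma a * ((a + 1) ^ (m - 1)) ≤ Real.Gamma (a + m) := by
      have e2 : (a + 1 : ℝ) ^ (m - 1) = (a + 1) * (a + 1) ^ (m - 2) := by
        rw [show m - 1 = 1 + (m - 2) by ring, Real.rpow_add ha10, Real.rpow_one]
      calc a * Real.Gamma a * ((a + 1) ^ (m - 1))
          = Real.Gamma (a + 2) * (a + 1) ^ (m - 2) := by rw [hrec2, e2]; ring
        _ ≤ Real.Gamma (a + m) := hA
    have hpow1 : (0:ℝ) < (a + 1) ^ (m - 1) := Real.rpow_pos_of_pos ha10 _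
    have hE1 : Real.pi ^ m * Real.Gamma a / Real.Gamma (a + m) ≤
        Real.pi ^ m / (a * (a + 1) ^ (m - 1)) := by
      rw [div_le_div_iff₀ hGb (by positivity)]
      calc Real.pi ^ m * Real.Gamma a * (a * (a + 1) ^ (m - 1))
          = Real.pi ^ m * (a * Real.Gamma a * ((a + 1) ^ (m - 1))) := by ring
        _ ≤ Real.pi ^ m * Real.Gamma (a + m) := mul_le_mul_of_nonneg_left hP (le_of_lt hpim)
    rcases le_or_gt 7 a with ha7 | ha7
    · -- `a ≥ 7`
      have epim : Real.pi ^ m = Real.pi * Real.pi ^ (m - 1) := by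
        have e := Real.rpow_add Real.pi_pos 1 (m - 1)
        rw [show (1:ℝ) + (m - 1) = m by ring, Real.rpow_one] at e
        exact e
      have hE2 : Real.pi ^ m / (a * (a + 1) ^ (m - 1)) =
          (Real.pi / a) * (Real.pi / (a + 1)) ^ (m - 1) := by
        rw [Real.div_rpow (le_of_lt Real.pi_pos) (le_of_lt ha10), epim]
        field_simp
      have hq2 : Real.pi / a ≤ 1 := by
        rw [div_le_one ha0]; linarith
      have hq3 : Real.pi / (a + 1) ≤ (2:ℝ)⁻¹ := by
        rw [div_le_iff₀ ha10]; nlinarith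
      have hE3 : (Real.pi / (a + 1)) ^ (m - 1) ≤ ((2:ℝ)⁻¹) ^ (m - 1) :=
        Real.rpow_le_rpow (by positivity) hq3 (by linarith)
      have hE4 : ((2:ℝ)⁻¹) ^ (m - 1) ≤ ((2:ℝ)⁻¹) ^ ((a + m) / 100 - 1) :=
        Real.rpow_le_rpow_of_exponent_ge (by norm_num) (by norm_num) (by linarith)
      have hE5 : ((2:ℝ)⁻¹) ^ ((a + m) / 100 - 1) = 2 * (2:ℝ) ^ (-((a + m) / 100)) := by
        rw [Real.rpow_sub (by norm_num : (0:ℝ) < 2⁻¹), Real.rpow_one,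
          Real.inv_rpow (by norm_num : (0:ℝ) ≤ 2), ← Real.rpow_neg (by norm_num : (0:ℝ) ≤ 2),
          div_eq_mul_inv, inv_inv]
        ring
      have hpw : (0:ℝ) < (Real.pi / (a + 1)) ^ (m - 1) := Real.rpow_pos_of_pos (by positivity) _
      have hfin : Real.pi ^ m / (a * (a + 1) ^ (m - 1)) ≤ 2 * (2:ℝ) ^ (-((a + m) / 100)) := by
        rw [hE2, ← hE5]
        calc (Real.pi / a) * (Real.pi / (a + 1)) ^ (m - 1)
            ≤ 1 * (((2:ℝ)⁻¹) ^ (m - 1)) := by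
              apply mul_le_mul hq2 hE3 (le_of_lt hpw) (by norm_num)
          _ = ((2:ℝ)⁻¹) ^ (m - 1) := by ring
          _ ≤ ((2:ℝ)⁻¹) ^ ((a + m) / 100 - 1) := hE4
      have h2pos : (0:ℝ) < (2:ℝ) ^ (-((a + m) / 100)) := Real.rpow_pos_of_pos (by norm_num) _
      unfold Fbound
      linarith
    · -- `a < 7`
      have hGa2 : (0:ℝ) < Real.Gamma (a + 2) := Real.Gamma_pos_of_pos (by linarith)
      have hG92 : Real.Gamma (a + 2) ≤ Real.Gamma 9 := by
        have h9 := gammaA ha2 (show a + 2 ≤ (9:ℝ) by linarith)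
        rw [show a + 2 - 1 = a + 1 by ring] at h9
        have hone : (1:ℝ) ≤ (a + 1) ^ ((9:ℝ) - (a + 2)) := by
          have h := Real.rpow_le_rpow_of_exponent_le (show (1:ℝ) ≤ a + 1 by linarith)
            (show (0:ℝ) ≤ (9:ℝ) - (a + 2) by linarith)
          rwa [Real.rpow_zero] at h
        have h' := mul_le_mul_of_nonneg_left hone hGa2.le
        rw [mul_one] at h'
        exact h'.trans h9
      have hGa9 : Real.Gamma a ≤ 4 / 3 * Real.Gamma 9 := by
        have h34 : (3:ℝ)/4 ≤ a * (a + 1) := by nlinarith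
        have hmm := mul_le_mul_of_nonneg_left h34 hGa.le
        have heq : Real.Gamma a * (a * (a + 1)) = Real.Gamma (a + 2) := by
          rw [hrec2]; ring
        rw [heq] at hmm
        linarith
      have hG30 : (1:ℝ) ≤ Real.Gamma 30 := by
        have h := gammaA (show (1:ℝ) < 2 by norm_num) (show (2:ℝ) ≤ 30 by norm_num)
        rw [Real.Gamma_two, show (2:ℝ) - 1 = 1 by norm_num, Real.one_rpow, one_mul] at h
        exact h
      have hGb29 : (29:ℝ) ^ ((a + m) - 30) ≤ Real.Gamma (a + m) := by
        have h := gammaA (show (1:ℝ) < 30 by norm_num) (show (30:ℝ) ≤ a + m by linarith)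
        rw [show (30:ℝ) - 1 = 29 by norm_num] at h
        have hp : (0:ℝ) < (29:ℝ) ^ ((a + m) - 30) := Real.rpow_pos_of_pos (by norm_num) _
        have h' := mul_le_mul_of_nonneg_right hG30 hp.le
        rw [one_mul] at h'
        exact h'.trans h
      have h29pos : (0:ℝ) < (29:ℝ) ^ ((a + m) - 30) := Real.rpow_pos_of_pos (by norm_num) _
      have hpib : Real.pi ^ m ≤ Real.pi ^ (a + m) :=
        Real.rpow_le_rpow_of_exponent_le (by linarith) (by linarith)
      have hE2 : Real.pi ^ m * Real.Gamma a / Real.Gamma (a + m) ≤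
          Real.pi ^ (a + m) * (4 / 3 * Real.Gamma 9) / (29:ℝ) ^ ((a + m) - 30) := by
        apply div_le_div₀ (by positivity) ?_ h29pos hGb29
        apply mul_le_mul hpib hGa9 (le_of_lt hGa) (by positivity)
      have e3 : Real.pi ^ (a + m) * (4 / 3 * Real.Gamma 9) / (29:ℝ) ^ ((a + m) - 30)
          = (4 / 3 * Real.Gamma 9 * (29:ℝ) ^ (30:ℝ)) * (Real.pi / 29) ^ (a + m) := by
        have h29b : (0:ℝ) < (29:ℝ) ^ (a + m) := Real.rpow_pos_of_pos (by norm_num) _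
        have h2930 : (0:ℝ) < (29:ℝ) ^ (30:ℝ) := Real.rpow_pos_of_pos (by norm_num) _
        rw [Real.rpow_sub (by norm_num : (0:ℝ) < 29),
          Real.div_rpow (le_of_lt Real.pi_pos) (by norm_num : (0:ℝ) ≤ 29)]
        field_simp
      unfold Fbound
      rw [e3] at hE2
      linarith

private lemma Fbound_tendsto : Tendsto Fbound atTop (nhds 0) := by
  have t1 : Tendsto (fun b : ℝ => Real.sqrt (3 * Real.pi / b)) atTop (nhds 0) := by
    have h : Tendsto (fun b : ℝ => 3 * Real.pi / b) atTop (nhds 0) :=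
      Tendsto.div_atTop tendsto_const_nhds tendsto_id
    have := (Real.continuous_sqrt.tendsto 0).comp h
    simpa [Function.comp_def] using this
  have t2 : Tendsto (fun b : ℝ => 4 * (2:ℝ) ^ (-(b / 100))) atTop (nhds 0) := by
    have hr0 : (0:ℝ) < (2:ℝ) ^ (-(1/100 : ℝ)) := Real.rpow_pos_of_pos (by norm_num) _
    have hr1 : (2:ℝ) ^ (-(1/100 : ℝ)) < 1 :=
      Real.rpow_lt_one_of_one_lt_of_neg (by norm_num) (by norm_num)
    have h := (tendsto_rpow_atTop_of_base_lt_one _ (by linarith) hr1).const_mul (4:ℝ)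
    rw [mul_zero] at h
    apply h.congr
    intro b
    rw [← Real.rpow_mul (by norm_num : (0:ℝ) ≤ 2),
      show (-(1/100:ℝ)) * b = -(b/100) by ring]
  have t3 : Tendsto (fun b : ℝ =>
      (4 / 3 * Real.Gamma 9 * (29:ℝ) ^ (30:ℝ)) * (Real.pi / 29) ^ b) atTop (nhds 0) := by
    have h0 : (-1:ℝ) < Real.pi / 29 := by
      have : (0:ℝ) < Real.pi / 29 := by positivity
      linarith
    have h1 : Real.pi / 29 < 1 := by
      rw [div_lt_one (by norm_num : (0:ℝ) < 29)]
      linarith [Real.pi_lt_four]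
    have h := (tendsto_rpow_atTop_of_base_lt_one _ h0 h1).const_mul
      (4 / 3 * Real.Gamma 9 * (29:ℝ) ^ (30:ℝ))
    rw [mul_zero] at h
    exact h
  have h := (t1.add t2).add t3
  rw [add_zero, add_zero] at h
  exact h

/-- If `(d_n,k_n)` is an admissible sequence (i.e. `1 ≤ k_n ≤ d_n−1` and `2k_n > d_n+1`)
with `d_n → ∞`, then `σ_{d_n,k_n} → 0`. -/
theorem sigmaHyp_tendsto_zero (d k : ℕ → ℕ)
    (hadm : ∀ n, 1 ≤ k n ∧ k n + 1 ≤ d n ∧ d n + 1 < 2 * k n)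
    (hd : Tendsto d atTop atTop) :
    Tendsto (fun n => sigmaHyp (d n) (k n)) atTop (nhds 0) := by
  have key : ∀ n, (d n : ℝ) + 2 ≤ 2 * k n := by
    intro n
    have h := (hadm n).2.2
    have : d n + 2 ≤ 2 * k n := h
    exact_mod_cast this
  have hkd : ∀ n, (k n : ℝ) + 1 ≤ d n := by
    intro n
    exact_mod_cast (hadm n).2.1
  have ha : ∀ n, 1/2 ≤ (2 * (k n : ℝ) - d n - 1) / 2 := by
    intro n; have := key n; linarith
  have hm : ∀ n, 1/2 ≤ ((d n : ℝ) - k n) / 2 := by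
    intro n; have := hkd n; linarith
  have hbtop : Tendsto (fun n => ((k n : ℝ) - 1) / 2) atTop atTop := by
    apply tendsto_atTop_mono (f := fun n => (d n : ℝ) / 4)
    · intro n; have := key n; linarith
    · exact (tendsto_natCast_atTop_atTop.comp hd).atTop_div_const (by norm_num)
  have hE : Tendsto (fun n => Real.pi ^ (((d n : ℝ) - k n) / 2) *
      Real.Gamma ((2 * (k n : ℝ) - d n - 1) / 2) /
      Real.Gamma (((k n : ℝ) - 1) / 2)) atTop (nhds 0) := by
    apply squeeze_zero' (g := fun n => Fbound (((k n : ℝ) - 1) / 2))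
    · apply Eventually.of_forall
      intro n
      have h1 := Real.Gamma_pos_of_pos (show (0:ℝ) < (2 * (k n : ℝ) - d n - 1) / 2 by
        have := ha n; linarith)
      have h2 := Real.Gamma_pos_of_pos (show (0:ℝ) < ((k n : ℝ) - 1) / 2 by
        have h3 := ha n; have h4 := hm n; linarith)
      have h5 : (0:ℝ) < Real.pi ^ (((d n : ℝ) - k n) / 2) :=
        Real.rpow_pos_of_pos Real.pi_pos _
      positivity
    · filter_upwards [hbtop.eventually_ge_atTop 400] with n hn
      have hsum : (2 * (k n : ℝ) - d n - 1) / 2 + ((d n : ℝ) - k n) / 2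
          = ((k n : ℝ) - 1) / 2 := by ring
      have h := mainBound ((2 * (k n : ℝ) - d n - 1) / 2) (((d n : ℝ) - k n) / 2)
        (ha n) (hm n) (by rw [hsum]; exact hn)
      rw [hsum] at h
      exact h
    · exact Fbound_tendsto.comp hbtop
  have h := (Real.continuous_sqrt.tendsto 0).comp hE
  rw [Real.sqrt_zero] at h
  exact h
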